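/- For every natural number k ≥ 2: sup over finite unit-distance graphs g of m_k(g) ≤ inf over periodic k-colorings c of p^per(c) ≤ 1/k. (Theorem 1 of the paper.) -/

import Mathlib

open MeasureTheory Real

noncomputable section

abbrev Plane := EuclideanSpace ℝ (Fin 2)

def vec (x y : ℝ) : Plane := (WithLp.equiv 2 (Fin 2 → ℝ)).symm ![x, y]

def dir (θ : ℝ) : Plane := vec (Real.cos θ) (Real.sin θ)

/-- The fundamental parallelogram `{t•u + s•v : 0 ≤ t, s < 1}`. -/
def para (u v : Plane) : Set Plane :=
  {x | ∃ t s : ℝ, 0 ≤ t ∧ t < 1 ∧ 0 ≤ s ∧ s < 1 ∧ x = t • u + s • v}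

/-- `p^per(c)` for a periodic coloring with fundamental parallelogram `para u v`. -/
def pper {k : ℕ} (c : Plane → Fin k) (u v : Plane) : ℝ :=
  (1 / (2 * π * (volume (para u v)).toReal)) *
    ∫ a in para u v, ∫ θ in (0:ℝ)..(2*π),
      (if c a = c (a + dir θ) then (1:ℝ) else 0)

-- Number of monochromatic edges of `G` under the vertex coloring `χ`.
open Classical in
def monoCount {V : Type} [Fintype V] {k : ℕ} (G : SimpleGraph V) (χ : V → Fin k) : ℕ :=
  (G.edgeFinset.filter fun e => (e.map χ).IsDiag).card

-- `m_k(G)`: the least fraction of monochromatic edges over all `k`-colorings of `G`.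
open Classical in
def mval {V : Type} [Fintype V] (k : ℕ) (G : SimpleGraph V) : ℝ :=
  ⨅ χ : V → Fin k, (monoCount G χ : ℝ) / (G.edgeFinset.card : ℝ)

namespace Aux

@[simp] lemma vec_apply0 (x y : ℝ) : vec x y 0 = x := rfl
@[simp] lemma vec_apply1 (x y : ℝ) : vec x y 1 = y := rfl

lemma plane_ext {x y : Plane} (h0 : x 0 = y 0) (h1 : x 1 = y 1) : x = y := by
  ext i
  fin_cases i
  · exact h0
  · exact h1

lemma dir_periodic : Function.Periodic dir (2 * π) := by
  intro θ
  unfold dir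
  rw [Real.cos_add_two_pi, Real.sin_add_two_pi]

/-- rotation by θ -/
def rot (θ : ℝ) (x : Plane) : Plane :=
  Real.cos θ • x + Real.sin θ • vec (-(x 1)) (x 0)

lemma rot_apply0 (θ : ℝ) (x : Plane) : rot θ x 0 = Real.cos θ * x 0 - Real.sin θ * x 1 := by
  simp [rot]; ring

lemma rot_apply1 (θ : ℝ) (x : Plane) : rot θ x 1 = Real.sin θ * x 0 + Real.cos θ * x 1 := by
  simp [rot]; ring

lemma rot_sub (θ : ℝ) (x y : Plane) : rot θ x - rot θ y = rot θ (x - y) := by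
  apply plane_ext <;>
    simp [rot_apply0, rot_apply1] <;> ring

lemma rot_dir (θ φ : ℝ) : rot θ (dir φ) = dir (θ + φ) := by
  apply plane_ext
  · rw [rot_apply0]
    simp [dir, Real.cos_add]
  · rw [rot_apply1]
    simp only [dir, vec_apply0, vec_apply1, Real.sin_add]

lemma continuous_rot (p : Plane) : Continuous fun θ => rot θ p :=
  (Real.continuous_cos.smul continuous_const).add (Real.continuous_sin.smul continuous_const)

lemma continuous_dir : Continuous dir := by
  have : dir = fun θ => Real.cos θ • vec 1 0 + Real.sin θ • vec 0 1 := by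
    funext θ
    apply plane_ext <;> simp [dir]
  rw [this]
  exact (Real.continuous_cos.smul continuous_const).add (Real.continuous_sin.smul continuous_const)

lemma exists_dir_eq {p q : Plane} (h : dist p q = 1) : ∃ φ, q - p = dir φ := by
  set w : Plane := q - p with hw
  have hnorm : ‖w‖ = 1 := by
    rw [hw, ← dist_eq_norm, dist_comm]; exact h
  have hsq : w 0 ^ 2 + w 1 ^ 2 = 1 := by
    have := EuclideanSpace.norm_eq w
    rw [hnorm] at this
    have h2 : Real.sqrt (∑ i : Fin 2, ‖w i‖ ^ 2) = 1 := this.symm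
    have h3 : (∑ i : Fin 2, ‖w i‖ ^ 2) = 1 := by
      have hnn : (0:ℝ) ≤ ∑ i : Fin 2, ‖w i‖ ^ 2 := by positivity
      nlinarith [Real.sq_sqrt hnn, h2]
    simpa [Fin.sum_univ_two, Real.norm_eq_abs, sq_abs] using h3
  set z : ℂ := ⟨w 0, w 1⟩ with hz
  have hzabs : ‖z‖ = 1 := by
    rw [Complex.norm_def, Complex.normSq_mk]
    rw [show w 0 * w 0 + w 1 * w 1 = 1 by nlinarith]
    exact Real.sqrt_one
  have hz0 : z ≠ 0 := by
    intro h0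
    rw [h0] at hzabs
    simp at hzabs
  refine ⟨z.arg, ?_⟩
  apply plane_ext
  · have := Complex.cos_arg hz0
    rw [hzabs] at this
    simpa [dir] using (by simpa using this.symm : w 0 = Real.cos z.arg)
  · have := Complex.sin_arg z
    rw [hzabs] at this
    simpa [dir] using (by simpa using this.symm : w 1 = Real.sin z.arg)


open Submodule Pointwise

variable {u v : Plane}

def bas (h : LinearIndependent ℝ ![u, v]) : Module.Basis (Fin 2) ℝ Plane :=
  basisOfLinearIndependentOfCardEqFinrank h (by simp)

@[simp] lemma bas_apply0 (h : LinearIndependent ℝ ![u, v]) : bas h 0 = u := by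
  simp [bas, coe_basisOfLinearIndependentOfCardEqFinrank]

@[simp] lemma bas_apply1 (h : LinearIndependent ℝ ![u, v]) : bas h 1 = v := by
  simp [bas, coe_basisOfLinearIndependentOfCardEqFinrank]

lemma para_eq (h : LinearIndependent ℝ ![u, v]) :
    para u v = ZSpan.fundamentalDomain (bas h) := by
  ext x
  constructor
  · rintro ⟨t, s, ht0, ht1, hs0, hs1, rfl⟩
    intro i
    have h0 : (bas h).repr (t • u + s • v) 0 = t := by
      conv_lhs => rw [show t • u + s • v = t • bas h 0 + s • bas h 1 by simp]
      rw [map_add, _root_.map_smul, _root_.map_smul, Module.Basis.repr_self, Module.Basis.repr_self]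
      simp [Finsupp.single_apply]
    have h1 : (bas h).repr (t • u + s • v) 1 = s := by
      conv_lhs => rw [show t • u + s • v = t • bas h 0 + s • bas h 1 by simp]
      rw [map_add, _root_.map_smul, _root_.map_smul, Module.Basis.repr_self, Module.Basis.repr_self]
      simp [Finsupp.single_apply]
    have hI : i = 0 ∨ i = 1 := by omega
    rcases hI with rfl | rfl
    · rw [h0]; exact Set.mem_Ico.mpr ⟨ht0, ht1⟩
    · rw [h1]; exact Set.mem_Ico.mpr ⟨hs0, hs1⟩
  · intro hx
    refine ⟨(bas h).repr x 0, (bas h).repr x 1, (hx 0).1, (hx 0).2, (hx 1).1, (hx 1).2, ?_⟩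
    have := (bas h).sum_repr x
    rw [Fin.sum_univ_two] at this
    simp only [bas_apply0, bas_apply1] at this
    exact this.symm

lemma para_measurableSet (h : LinearIndependent ℝ ![u, v]) : MeasurableSet (para u v) := by
  rw [para_eq h]; exact ZSpan.fundamentalDomain_measurableSet (bas h)

lemma para_vol_ne_zero (h : LinearIndependent ℝ ![u, v]) : volume (para u v) ≠ 0 := by
  rw [para_eq h]; exact ZSpan.measure_fundamentalDomain_ne_zero (bas h)

lemma para_vol_ne_top (h : LinearIndependent ℝ ![u, v]) : volume (para u v) ≠ ⊤ := by
  rw [para_eq h]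
  exact ((ZSpan.fundamentalDomain_isBounded (bas h)).measure_lt_top).ne

lemma periodic_zsmul {F : Plane → ℝ} {y : Plane} (hy : ∀ x, F (x + y) = F x) :
    ∀ (n : ℤ) (x : Plane), F (x + n • y) = F x := by
  have hneg : ∀ x, F (x + -y) = F x := by
    intro x
    have h1 := hy (x + -y)
    rw [show x + -y + y = x by abel] at h1
    exact h1.symm
  intro n
  induction n using Int.induction_on with
  | zero => simp
  | succ m hm =>
      intro x
      rw [show x + ((m : ℤ) + 1) • y = (x + (m : ℤ) • y) + y by rw [add_smul, one_smul]; abel,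
        hy, hm]
  | pred m hm =>
      intro x
      rw [show x + (-(m : ℤ) - 1) • y = (x + (-(m : ℤ)) • y) + -y by
            rw [sub_smul, one_smul]; abel,
        hneg, hm]

lemma periodic_span (h : LinearIndependent ℝ ![u, v]) {F : Plane → ℝ}
    (hFu : ∀ x, F (x + u) = F x) (hFv : ∀ x, F (x + v) = F x) :
    ∀ l ∈ span ℤ (Set.range ⇑(bas h)), ∀ x, F (x + l) = F x := by
  intro l hl
  induction hl using Submodule.span_induction with
  | mem y hy =>
      obtain ⟨i, rfl⟩ := hy
      fin_cases i
      · simpa using hFu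
      · simpa using hFv
  | zero => simp
  | add y z _ _ hy hz =>
      intro x
      rw [← add_assoc, hz, hy]
  | smul n y _ hy =>
      intro x
      exact periodic_zsmul hy n x

lemma setIntegral_para_add_right (h : LinearIndependent ℝ ![u, v]) {F : Plane → ℝ}
    (hFu : ∀ x, F (x + u) = F x) (hFv : ∀ x, F (x + v) = F x) (t : Plane) :
    ∫ x in para u v, F (x + t) = ∫ x in para u v, F x := by
  classical
  rw [para_eq h]
  set b := bas h
  set L := (span ℤ (Set.range ⇑b)).toAddSubgroup with hL
  have hD : IsAddFundamentalDomain L (ZSpan.fundamentalDomain b) volume :=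
    ZSpan.isAddFundamentalDomain' b volume
  haveI : Countable L := inferInstanceAs (Countable (span ℤ (Set.range ⇑b)))
  letI : VAddCommClass Plane L Plane := ⟨fun a l x => add_left_comm a (↑l) x⟩
  have hD' : IsAddFundamentalDomain L (t +ᵥ ZSpan.fundamentalDomain b) volume :=
    hD.vadd_of_comm t
  have hinv : ∀ (l : L) (x : Plane), F (l +ᵥ x) = F x := by
    intro l x
    have := periodic_span h hFu hFv l.1 l.2 x
    rw [show (l +ᵥ x : Plane) = x + l.1 by exact add_comm _ _]
    exact this
  have key : ∫ x in (t +ᵥ ZSpan.fundamentalDomain b), F x = ∫ x in ZSpan.fundamentalDomain b, F x :=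
    hD'.setIntegral_eq hD hinv
  have h1 := (measurePreserving_add_right volume t).setIntegral_preimage_emb
      (measurableEmbedding_addRight t) F (t +ᵥ ZSpan.fundamentalDomain b)
  have hpre : (fun x => x + t) ⁻¹' (t +ᵥ ZSpan.fundamentalDomain b)
      = ZSpan.fundamentalDomain b := by
    ext x
    simp only [Set.mem_preimage, Set.mem_vadd_set]
    constructor
    · rintro ⟨y, hy, hxy⟩
      obtain rfl : y = x := by
        have h2 : t + y = x + t := hxy
        rwa [add_comm x t, add_right_inj] at h2
      exact hy
    · intro hx
      exact ⟨x, hx, by show t + x = x + t; exact add_comm _ _⟩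
  rw [← key, ← h1, hpre]



/-! ### Product-measure machinery -/

def μP (u v : Plane) : Measure (Plane × ℝ) :=
  (volume.restrict (para u v)).prod (volume.restrict (Set.Ioc 0 (2*π)))

lemma two_pi_pos : (0:ℝ) < 2 * π := by positivity

lemma isFiniteMeasure_para (h : LinearIndependent ℝ ![u, v]) :
    IsFiniteMeasure (volume.restrict (para u v)) :=
  ⟨by rw [Measure.restrict_apply_univ]; exact lt_top_iff_ne_top.mpr (para_vol_ne_top h)⟩

lemma isFiniteMeasure_Ioc : IsFiniteMeasure (volume.restrict (Set.Ioc (0:ℝ) (2*π))) :=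
  ⟨by rw [Measure.restrict_apply_univ, Real.volume_Ioc]; exact ENNReal.ofReal_lt_top⟩

lemma isFiniteMeasure_μP (h : LinearIndependent ℝ ![u, v]) : IsFiniteMeasure (μP u v) := by
  haveI := isFiniteMeasure_para h
  haveI := isFiniteMeasure_Ioc
  exact inferInstanceAs (IsFiniteMeasure ((volume.restrict (para u v)).prod
    (volume.restrict (Set.Ioc 0 (2*π)))))

lemma integrable_bounded (h : LinearIndependent ℝ ![u, v]) {g : Plane × ℝ → ℝ}
    (hg : Measurable g) {C : ℝ} (hb : ∀ z, ‖g z‖ ≤ C) : Integrable g (μP u v) := by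
  haveI := isFiniteMeasure_μP h
  exact ⟨hg.aestronglyMeasurable, HasFiniteIntegral.of_bounded (ae_of_all _ hb)⟩

lemma μP_univ_toReal (h : LinearIndependent ℝ ![u, v]) :
    (μP u v Set.univ).toReal = (volume (para u v)).toReal * (2*π) := by
  rw [μP, show (Set.univ : Set (Plane × ℝ)) = Set.univ ×ˢ Set.univ from (Set.univ_prod_univ).symm,
    Measure.prod_prod, Measure.restrict_apply_univ, Measure.restrict_apply_univ,
    Real.volume_Ioc, ENNReal.toReal_mul, ENNReal.toReal_ofReal (by rw [sub_zero]; positivity)]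
  ring

lemma J_eq (h : LinearIndependent ℝ ![u, v]) {g : Plane → ℝ → ℝ}
    (hg : Measurable (Function.uncurry g)) {C : ℝ} (hb : ∀ z, ‖Function.uncurry g z‖ ≤ C) :
    (∫ a in para u v, ∫ θ in (0:ℝ)..(2*π), g a θ) = ∫ z, g z.1 z.2 ∂(μP u v) := by
  have h2π : (0:ℝ) ≤ 2*π := two_pi_pos.le
  have hint : Integrable (Function.uncurry g) (μP u v) := integrable_bounded h hg hb
  have := MeasureTheory.integral_prod (μ := volume.restrict (para u v))
    (ν := volume.restrict (Set.Ioc 0 (2*π))) (Function.uncurry g) hint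
  rw [show (∫ z, g z.1 z.2 ∂(μP u v)) = ∫ z, Function.uncurry g z ∂(μP u v) from rfl, μP, this]
  apply setIntegral_congr_fun (para_measurableSet h)
  intro a _
  exact intervalIntegral.integral_of_le h2π

/-- the indicator integrand for a pair of moving points -/
def edgeInd {k : ℕ} (c : Plane → Fin k) (p q : Plane) (z : Plane × ℝ) : ℝ :=
  if c (rot z.2 p + z.1) = c (rot z.2 q + z.1) then 1 else 0

def diagInd {k : ℕ} (c : Plane → Fin k) (z : Plane × ℝ) : ℝ :=
  if c z.1 = c (z.1 + dir z.2) then 1 else 0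

lemma measurable_edgeInd {k : ℕ} {c : Plane → Fin k} (hc : Measurable c) (p q : Plane) :
    Measurable (edgeInd c p q) := by
  have h1 : Measurable fun z : Plane × ℝ => rot z.2 p + z.1 :=
    (((continuous_rot p).comp continuous_snd).add continuous_fst).measurable
  have h2 : Measurable fun z : Plane × ℝ => rot z.2 q + z.1 :=
    (((continuous_rot q).comp continuous_snd).add continuous_fst).measurable
  exact Measurable.ite (measurableSet_eq_fun (hc.comp h1) (hc.comp h2))
    measurable_const measurable_const

lemma measurable_diagInd {k : ℕ} {c : Plane → Fin k} (hc : Measurable c) :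
    Measurable (diagInd c) := by
  have h1 : Measurable fun z : Plane × ℝ => z.1 + dir z.2 :=
    (continuous_fst.add (continuous_dir.comp continuous_snd)).measurable
  exact Measurable.ite (measurableSet_eq_fun (hc.comp measurable_fst)
    (hc.comp h1)) measurable_const measurable_const

lemma norm_ind_le {P : Prop} [Decidable P] : ‖if P then (1:ℝ) else 0‖ ≤ 1 := by
  split <;> simp

/-- The per-edge integral identity. -/
lemma edge_integral {k : ℕ} {c : Plane → Fin k} (hc : Measurable c)
    (h : LinearIndependent ℝ ![u, v])
    (hper : ∀ y : Plane, c (y + u) = c y ∧ c (y + v) = c y)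
    {p q : Plane} (hpq : dist p q = 1) :
    ∫ z, edgeInd c p q z ∂(μP u v) = ∫ z, diagInd c z ∂(μP u v) := by
  obtain ⟨φ, hφ⟩ := exists_dir_eq hpq
  have h2π : (0:ℝ) ≤ 2*π := two_pi_pos.le
  set H : ℝ → ℝ := fun ψ => ∫ a in para u v, (if c a = c (a + dir ψ) then (1:ℝ) else 0) with hH
  have hrot : ∀ θ, rot θ q = rot θ p + dir (θ + φ) := by
    intro θ
    have h1 := rot_sub θ q p
    rw [hφ, rot_dir] at h1
    rw [← h1]
    abel
  -- step 1 : inner integral over a equals H (θ + φ)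
  have step1 : ∀ θ : ℝ, (∫ a in para u v, edgeInd c p q (a, θ)) = H (θ + φ) := by
    intro θ
    have hcong : ∀ a : Plane, edgeInd c p q (a, θ)
        = (fun x => if c x = c (x + dir (θ + φ)) then (1:ℝ) else 0) (a + rot θ p) := by
      intro a
      simp only [edgeInd]
      rw [show rot θ p + a = a + rot θ p from add_comm _ _,
        hrot θ, show rot θ p + dir (θ + φ) + a = a + rot θ p + dir (θ + φ) by abel]
    rw [show (∫ a in para u v, edgeInd c p q (a, θ))
        = ∫ a in para u v, (fun x => if c x = c (x + dir (θ + φ)) then (1:ℝ) else 0)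
          (a + rot θ p) from by
      apply setIntegral_congr_fun (para_measurableSet h); intro a _; exact hcong a]
    have hFu : ∀ x : Plane, (if c (x + u) = c (x + u + dir (θ + φ)) then (1:ℝ) else 0)
        = (if c x = c (x + dir (θ + φ)) then (1:ℝ) else 0) := by
      intro x
      rw [(hper x).1, show x + u + dir (θ + φ) = x + dir (θ + φ) + u by abel,
        (hper (x + dir (θ + φ))).1]
    have hFv : ∀ x : Plane, (if c (x + v) = c (x + v + dir (θ + φ)) then (1:ℝ) else 0)
        = (if c x = c (x + dir (θ + φ)) then (1:ℝ) else 0) := by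
      intro x
      rw [(hper x).2, show x + v + dir (θ + φ) = x + dir (θ + φ) + v by abel,
        (hper (x + dir (θ + φ))).2]
    exact setIntegral_para_add_right (F := fun x =>
      if c x = c (x + dir (θ + φ)) then (1:ℝ) else 0) h hFu hFv (rot θ p)
  have step1' : ∀ θ : ℝ, (∫ a in para u v, diagInd c (a, θ)) = H θ := fun θ => rfl
  have hHper : Function.Periodic H (2*π) := by
    intro ψ
    simp only [hH]
    congr 1
    funext a
    rw [dir_periodic ψ]
  have hint1 : Integrable (edgeInd c p q) (μP u v) :=
    integrable_bounded h (measurable_edgeInd hc p q) (fun z => norm_ind_le)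
  have hint2 : Integrable (diagInd c) (μP u v) :=
    integrable_bounded h (measurable_diagInd hc) (fun z => norm_ind_le)
  rw [μP] at hint1 hint2 ⊢
  rw [MeasureTheory.integral_prod_symm _ hint1, MeasureTheory.integral_prod_symm _ hint2]
  calc ∫ θ in Set.Ioc 0 (2*π), ∫ a in para u v, edgeInd c p q (a, θ)
      = ∫ θ in Set.Ioc 0 (2*π), H (θ + φ) := by
        apply setIntegral_congr_fun measurableSet_Ioc
        intro θ _
        exact step1 θ
    _ = ∫ θ in (0:ℝ)..(2*π), H (θ + φ) := (intervalIntegral.integral_of_le h2π).symm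
    _ = ∫ θ in (0+φ:ℝ)..(2*π+φ), H θ := intervalIntegral.integral_comp_add_right H φ
    _ = ∫ θ in (φ:ℝ)..(φ+2*π), H θ := by rw [zero_add, add_comm (2*π) φ]
    _ = ∫ θ in (0:ℝ)..(0+2*π), H θ := hHper.intervalIntegral_add_eq φ 0
    _ = ∫ θ in (0:ℝ)..(2*π), H θ := by rw [zero_add]
    _ = ∫ θ in Set.Ioc 0 (2*π), H θ := intervalIntegral.integral_of_le h2π
    _ = ∫ θ in Set.Ioc 0 (2*π), ∫ a in para u v, diagInd c (a, θ) := by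
        apply setIntegral_congr_fun measurableSet_Ioc
        intro θ _
        exact (step1' θ).symm


/-! ### Part 1 : `mval ≤ pper` -/

open Classical in
lemma monoCount_cast_eq_sum {V : Type} [Fintype V] {k : ℕ} (G : SimpleGraph V)
    (χ : V → Fin k) :
    (monoCount G χ : ℝ) = ∑ e ∈ G.edgeFinset, (if (e.map χ).IsDiag then (1:ℝ) else 0) := by
  classical
  unfold monoCount
  rw [Finset.card_filter]
  push_cast
  apply Finset.sum_congr rfl
  intro e _
  congr 1

open Classical in
lemma mval_nonneg_aux {V : Type} [Fintype V] {k : ℕ} (G : SimpleGraph V) :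
    BddBelow (Set.range fun χ : V → Fin k => (monoCount G χ : ℝ) / (G.edgeFinset.card : ℝ)) := by
  refine ⟨0, ?_⟩
  rintro x ⟨χ', rfl⟩
  positivity

lemma part1 {k : ℕ} (hk : 2 ≤ k) {n : ℕ} (G : SimpleGraph (Fin n)) (hne : G.edgeSet.Nonempty)
    {f : Fin n → Plane} (hf : ∀ i j, G.Adj i j → dist (f i) (f j) = 1)
    {c : Plane → Fin k} (hc : Measurable c) (h : LinearIndependent ℝ ![u, v])
    (hper : ∀ y : Plane, c (y + u) = c y ∧ c (y + v) = c y) :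
    mval k G ≤ pper c u v := by
  classical
  haveI : Nonempty (Fin k) := ⟨⟨0, by omega⟩⟩
  haveI := isFiniteMeasure_μP h
  set A := (volume (para u v)).toReal with hA
  have hApos : 0 < A := ENNReal.toReal_pos (para_vol_ne_zero h) (para_vol_ne_top h)
  have hEfin : G.edgeFinset.Nonempty := by
    obtain ⟨e, he⟩ := hne
    exact ⟨e, SimpleGraph.mem_edgeFinset.mpr he⟩
  have hEpos : 0 < (G.edgeFinset.card : ℝ) := by
    exact_mod_cast Finset.card_pos.mpr hEfin
  -- decompose the edges
  have hedge : ∀ e : {x // x ∈ G.edgeFinset}, ∃ i j : Fin n, G.Adj i j ∧ e.1 = s(i, j) := by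
    rintro ⟨e, he⟩
    induction e with
    | _ i j =>
      exact ⟨i, j, (SimpleGraph.mem_edgeSet G).mp (SimpleGraph.mem_edgeFinset.mp he), rfl⟩
  choose I J hadj hrep using hedge
  set χ : Plane × ℝ → Fin n → Fin k := fun z i => c (rot z.2 (f i) + z.1) with hχ
  set N : Plane × ℝ → ℝ := fun z => (monoCount G (χ z) : ℝ) with hNdef
  have hN_eq : (fun z => N z)
      = fun z => ∑ e ∈ G.edgeFinset.attach, edgeInd c (f (I e)) (f (J e)) z := by
    funext z
    show (monoCount G (χ z) : ℝ) = _
    rw [monoCount_cast_eq_sum,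
      ← Finset.sum_attach G.edgeFinset (fun e => if (Sym2.map (χ z) e).IsDiag then (1:ℝ) else 0)]
    apply Finset.sum_congr rfl
    intro e _
    rw [hrep e, Sym2.map_pair_eq]
    simp only [Sym2.mk_isDiag_iff]
    exact if_congr Iff.rfl rfl rfl
  set Idiag := ∫ z, diagInd c z ∂(μP u v) with hIdiagdef
  have key1 : ∫ z, N z ∂(μP u v) = (G.edgeFinset.card : ℝ) * Idiag := by
    rw [hN_eq]
    rw [MeasureTheory.integral_finset_sum _ (fun e _ =>
      integrable_bounded h (measurable_edgeInd hc _ _) (fun z => norm_ind_le))]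
    rw [Finset.sum_congr rfl (fun e _ => edge_integral hc h hper (hf _ _ (hadj e)))]
    rw [Finset.sum_const, Finset.card_attach, nsmul_eq_mul]
  have key2 : mval k G * (G.edgeFinset.card : ℝ) * (A * (2*π)) ≤ ∫ z, N z ∂(μP u v) := by
    have hpt : ∀ z, mval k G * (G.edgeFinset.card : ℝ) ≤ N z := by
      intro z
      have h1 : mval k G ≤ N z / (G.edgeFinset.card : ℝ) :=
        ciInf_le (mval_nonneg_aux G) (χ z)
      calc mval k G * (G.edgeFinset.card : ℝ)
          ≤ (N z / (G.edgeFinset.card : ℝ)) * (G.edgeFinset.card : ℝ) :=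
            mul_le_mul_of_nonneg_right h1 hEpos.le
        _ = N z := div_mul_cancel₀ _ hEpos.ne'
    have hint : Integrable N (μP u v) := by
      rw [show N = fun z => N z from rfl, hN_eq]
      exact integrable_finset_sum _ (fun e _ =>
        integrable_bounded h (measurable_edgeInd hc _ _) (fun z => norm_ind_le))
    have hmono := integral_mono (integrable_const (mval k G * (G.edgeFinset.card : ℝ))) hint hpt
    rwa [integral_const, measureReal_def, μP_univ_toReal h, smul_eq_mul, ← hA,
      show A * (2*π) * (mval k G * (G.edgeFinset.card : ℝ))
        = mval k G * (G.edgeFinset.card : ℝ) * (A * (2*π)) by ring] at hmono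
  have hpper : pper c u v = (1/(2*π*A)) * Idiag := by
    rw [pper, ← hA, hIdiagdef]
    congr 1
    exact J_eq h (measurable_diagInd hc) (C := 1) (fun z => norm_ind_le)
  rw [hpper, one_div_mul_eq_div, le_div_iff₀ (by positivity : (0:ℝ) < 2*π*A)]
  have h2 : mval k G * (G.edgeFinset.card : ℝ) * (A * (2*π))
      ≤ (G.edgeFinset.card : ℝ) * Idiag := key1 ▸ key2
  nlinarith [h2, hEpos, hApos]


/-! ### Part 2 : a coloring with `pper ≤ 1/k` -/

def uu : Plane := vec 2 0
def vv : Plane := vec 0 2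

lemma hli2 : LinearIndependent ℝ ![uu, vv] := by
  rw [linearIndependent_fin2]
  constructor
  · intro h0
    have := congrArg (fun w : Plane => w 1) h0
    simp [vv] at this
  · intro a ha
    have := congrArg (fun w : Plane => w 0) ha
    simp [uu, vv, PiLp.smul_apply] at this

def gfun (x : Plane) : ZMod 4 × ZMod 4 :=
  (((⌊2 * x 0⌋ : ℤ) : ZMod 4), ((⌊2 * x 1⌋ : ℤ) : ZMod 4))

def col {k : ℕ} (σ : ZMod 4 × ZMod 4 → Fin k) (x : Plane) : Fin k := σ (gfun x)

lemma measurable_coord (i : Fin 2) : Measurable fun x : Plane => x i :=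
  (EuclideanSpace.proj (𝕜 := ℝ) i).continuous.measurable

lemma measurable_col {k : ℕ} (σ : ZMod 4 × ZMod 4 → Fin k) : Measurable (col σ) := by
  letI : MeasurableSpace (ZMod 4 × ZMod 4) := ⊤
  have hfl : ∀ i : Fin 2, Measurable fun x : Plane => ⌊2 * x i⌋ :=
    fun i => (measurable_const.mul (measurable_coord i)).floor
  have hg : Measurable gfun := by
    apply measurable_to_countable'
    intro z
    have : gfun ⁻¹' {z} = ((fun x : Plane => ⌊2 * x 0⌋) ⁻¹' {n : ℤ | (n : ZMod 4) = z.1})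
        ∩ ((fun x : Plane => ⌊2 * x 1⌋) ⁻¹' {n : ℤ | (n : ZMod 4) = z.2}) := by
      ext x
      simp only [Set.mem_preimage, Set.mem_singleton_iff, Set.mem_inter_iff, Set.mem_setOf_eq,
        gfun, Prod.ext_iff]
    rw [this]
    exact ((hfl 0) trivial).inter ((hfl 1) trivial)
  exact (measurable_from_top (f := σ)).comp hg

lemma col_periodic {k : ℕ} (σ : ZMod 4 × ZMod 4 → Fin k) :
    ∀ y : Plane, col σ (y + uu) = col σ y ∧ col σ (y + vv) = col σ y := by
  have key : ∀ (t : ℝ), ((⌊2 * (t + 2)⌋ : ℤ) : ZMod 4) = ((⌊2 * t⌋ : ℤ) : ZMod 4) := by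
    intro t
    rw [show 2 * (t + 2) = 2 * t + ((4:ℤ):ℝ) by push_cast; ring, Int.floor_add_intCast,
      Int.cast_add, show (((4:ℤ)) : ZMod 4) = 0 by decide, add_zero]
  intro y
  constructor
  · show σ (gfun (y + uu)) = σ (gfun y)
    congr 1
    unfold gfun
    have h0 : (y + uu) 0 = y 0 + 2 := by simp [uu, PiLp.add_apply]
    have h1 : (y + uu) 1 = y 1 := by simp [uu, PiLp.add_apply]
    rw [h0, h1, key]
  · show σ (gfun (y + vv)) = σ (gfun y)
    congr 1
    unfold gfun
    have h0 : (y + vv) 0 = y 0 := by simp [vv, PiLp.add_apply]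
    have h1 : (y + vv) 1 = y 1 + 2 := by simp [vv, PiLp.add_apply]
    rw [h0, h1, key]

lemma floor_step {x y : ℝ} (hy : |y| ≤ 1)
    (hz : ((⌊2*(x+y)⌋ : ℤ) : ZMod 4) = ((⌊2*x⌋ : ℤ) : ZMod 4)) : |y| < 1/2 := by
  have hmod := (ZMod.intCast_eq_intCast_iff' _ _ _).mp hz
  have h1 : (⌊2*(x+y)⌋ : ℝ) ≤ 2*(x+y) := Int.floor_le _
  have h2 : 2*(x+y) < ⌊2*(x+y)⌋ + 1 := Int.lt_floor_add_one _
  have h3 : (⌊2*x⌋ : ℝ) ≤ 2*x := Int.floor_le _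
  have h4 : 2*x < ⌊2*x⌋ + 1 := Int.lt_floor_add_one _
  obtain ⟨hy1, hy2⟩ := abs_le.mp hy
  have hb1 : ⌊2*(x+y)⌋ < ⌊2*x⌋ + 3 := by
    have : ((⌊2*(x+y)⌋ : ℤ) : ℝ) < ((⌊2*x⌋ + 3 : ℤ) : ℝ) := by push_cast; nlinarith
    exact_mod_cast this
  have hb2 : ⌊2*x⌋ - 3 < ⌊2*(x+y)⌋ := by
    have : ((⌊2*x⌋ - 3 : ℤ) : ℝ) < ((⌊2*(x+y)⌋ : ℤ) : ℝ) := by push_cast; nlinarith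
    exact_mod_cast this
  have heq : ⌊2*(x+y)⌋ = ⌊2*x⌋ := by omega
  rw [heq] at h1 h2
  rw [abs_lt]
  constructor <;> nlinarith

lemma grid_ne (a : Plane) (θ : ℝ) : gfun a ≠ gfun (a + dir θ) := by
  intro hg
  have hadd0 : (a + dir θ) 0 = a 0 + Real.cos θ := by simp [dir, PiLp.add_apply]
  have hadd1 : (a + dir θ) 1 = a 1 + Real.sin θ := by simp [dir, PiLp.add_apply]
  have h0 : ((⌊2*(a 0 + Real.cos θ)⌋ : ℤ) : ZMod 4) = ((⌊2*(a 0)⌋ : ℤ) : ZMod 4) := by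
    have := congrArg Prod.fst hg
    simp only [gfun, hadd0] at this
    exact this.symm
  have h1 : ((⌊2*(a 1 + Real.sin θ)⌋ : ℤ) : ZMod 4) = ((⌊2*(a 1)⌋ : ℤ) : ZMod 4) := by
    have := congrArg Prod.snd hg
    simp only [gfun, hadd1] at this
    exact this.symm
  have hc := floor_step (Real.abs_cos_le_one θ) h0
  have hs := floor_step (Real.abs_sin_le_one θ) h1
  obtain ⟨hc1, hc2⟩ := abs_lt.mp hc
  obtain ⟨hs1, hs2⟩ := abs_lt.mp hs
  nlinarith [Real.sin_sq_add_cos_sq θ]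

lemma card_eq_endpoints {k : ℕ} {Z : Type} [Fintype Z] [DecidableEq Z] {p q : Z} (hpq : p ≠ q) :
    ((Finset.univ.filter fun σ : Z → Fin k => σ p = σ q).card) = k ^ (Fintype.card Z - 1) := by
  classical
  rw [← Fintype.card_subtype]
  have e : {σ : Z → Fin k // σ p = σ q} ≃ ({j : Z // j ≠ q} → Fin k) :=
    { toFun := fun σ j => σ.1 j.1
      invFun := fun τ => ⟨fun z => if hz : z = q then τ ⟨p, hpq⟩ else τ ⟨z, hz⟩, by
        show (if hz : p = q then τ ⟨p, hpq⟩ else τ ⟨p, hz⟩)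
          = (if hz : q = q then τ ⟨p, hpq⟩ else τ ⟨q, hz⟩)
        rw [dif_neg hpq, dif_pos rfl]⟩
      left_inv := fun σ => by
        apply Subtype.ext
        funext z
        show (if hz : z = q then σ.1 p else σ.1 z) = σ.1 z
        by_cases hz : z = q
        · subst hz
          rw [dif_pos rfl]
          exact σ.2
        · rw [dif_neg hz]
      right_inv := fun τ => by
        funext j
        show (if hz : j.1 = q then τ ⟨p, hpq⟩ else τ ⟨j.1, hz⟩) = τ j
        rw [dif_neg j.2] }
  rw [Fintype.card_congr e, Fintype.card_fun, Fintype.card_fin]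
  congr 1
  rw [Fintype.card_subtype_compl, Fintype.card_subtype_eq]

lemma sum_ind {k : ℕ} (hk : 0 < k) (a : Plane) (θ : ℝ) :
    ∑ σ : (ZMod 4 × ZMod 4) → Fin k, (if col σ a = col σ (a + dir θ) then (1:ℝ) else 0)
      = (k:ℝ) ^ 15 := by
  classical
  rw [Finset.sum_boole]
  have : (Finset.univ.filter fun σ : (ZMod 4 × ZMod 4) → Fin k
      => col σ a = col σ (a + dir θ)).card
      = (Finset.univ.filter fun σ : (ZMod 4 × ZMod 4) → Fin k
      => σ (gfun a) = σ (gfun (a + dir θ))).card := by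
    congr 1
  rw [this, card_eq_endpoints (grid_ne a θ)]
  have hZ : Fintype.card (ZMod 4 × ZMod 4) = 16 := by
    rw [Fintype.card_prod, ZMod.card]
  rw [hZ]
  norm_num

lemma part2 {k : ℕ} (hk : 2 ≤ k) :
    ∃ (c : Plane → Fin k) (u v : Plane), Measurable c ∧ LinearIndependent ℝ ![u, v] ∧
      (∀ y : Plane, c (y + u) = c y ∧ c (y + v) = c y) ∧ pper c u v ≤ 1 / k := by
  classical
  haveI : Nonempty (Fin k) := ⟨⟨0, by omega⟩⟩
  have hk0 : (0:ℝ) < (k:ℝ) := by exact_mod_cast (by omega : 0 < k)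
  suffices hex : ∃ σ : ZMod 4 × ZMod 4 → Fin k, pper (col σ) uu vv ≤ 1/(k:ℝ) by
    obtain ⟨σ, hσ⟩ := hex
    exact ⟨col σ, uu, vv, measurable_col σ, hli2, col_periodic σ, hσ⟩
  by_contra hcon
  push_neg at hcon
  set A := (volume (para uu vv)).toReal with hA
  have hApos : 0 < A := ENNReal.toReal_pos (para_vol_ne_zero hli2) (para_vol_ne_top hli2)
  have hsum : ∑ σ : ZMod 4 × ZMod 4 → Fin k, pper (col σ) uu vv = (k:ℝ)^15 := by
    have hpper : ∀ σ : ZMod 4 × ZMod 4 → Fin k, pper (col σ) uu vv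
        = (1/(2*π*A)) * ∫ z, diagInd (col σ) z ∂(μP uu vv) := by
      intro σ
      rw [pper, ← hA]
      congr 1
      exact J_eq hli2 (measurable_diagInd (measurable_col σ)) (C := 1) (fun z => norm_ind_le)
    rw [Finset.sum_congr rfl (fun σ _ => hpper σ), ← Finset.mul_sum,
      ← MeasureTheory.integral_finset_sum _ (fun (σ : ZMod 4 × ZMod 4 → Fin k) _ =>
        integrable_bounded hli2 (measurable_diagInd (measurable_col σ)) (C := 1)
          (fun z => norm_ind_le))]
    have hconst : (fun z : Plane × ℝ => ∑ σ : ZMod 4 × ZMod 4 → Fin k, diagInd (col σ) z)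
        = fun _ => (k:ℝ)^15 := by
      funext z
      exact sum_ind (by omega) z.1 z.2
    rw [hconst, integral_const, measureReal_def, μP_univ_toReal hli2, ← hA, smul_eq_mul]
    field_simp
  have hcard : (Fintype.card ((ZMod 4 × ZMod 4) → Fin k) : ℝ) = (k:ℝ)^16 := by
    rw [Fintype.card_fun, Fintype.card_fin, Fintype.card_prod, ZMod.card]
    push_cast
    norm_num
  have hlt : (k:ℝ)^15 < ∑ σ : ZMod 4 × ZMod 4 → Fin k, pper (col σ) uu vv := by
    calc (k:ℝ)^15
        = (Fintype.card ((ZMod 4 × ZMod 4) → Fin k) : ℝ) * (1/(k:ℝ)) := by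
          rw [hcard]
          field_simp
      _ = ∑ _σ : ZMod 4 × ZMod 4 → Fin k, (1/(k:ℝ)) := by
          rw [Finset.sum_const, Finset.card_univ, nsmul_eq_mul]
      _ < ∑ σ : ZMod 4 × ZMod 4 → Fin k, pper (col σ) uu vv :=
          Finset.sum_lt_sum_of_nonempty Finset.univ_nonempty (fun σ _ => hcon σ)
  rw [hsum] at hlt
  exact absurd hlt (lt_irrefl _)


lemma pper_nonneg {k : ℕ} {c : Plane → Fin k} {u v : Plane}
    (h : LinearIndependent ℝ ![u, v]) : 0 ≤ pper c u v := by
  apply mul_nonneg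
  · apply one_div_nonneg.mpr
    positivity
  · apply setIntegral_nonneg (para_measurableSet h)
    intro a _
    apply intervalIntegral.integral_nonneg two_pi_pos.le
    intro θ _
    split <;> norm_num

end Aux

open Aux

/-- Theorem 1: `sup_g m_k(g) ≤ inf_c p^per(c) ≤ 1/k`, where the supremum ranges over
finite unit-distance graphs `g` with at least one edge and the infimum over periodic
`k`-colorings `c` of the plane. -/

theorem stmt2 (k : ℕ) (hk : 2 ≤ k) :
    sSup {x : ℝ | ∃ (n : ℕ) (G : SimpleGraph (Fin n)),
        G.edgeSet.Nonempty ∧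
        (∃ f : Fin n → Plane, ∀ i j : Fin n, G.Adj i j → dist (f i) (f j) = 1) ∧
        x = mval k G} ≤
      sInf {x : ℝ | ∃ (c : Plane → Fin k) (u v : Plane), Measurable c ∧
        LinearIndependent ℝ ![u, v] ∧
        (∀ y : Plane, c (y + u) = c y ∧ c (y + v) = c y) ∧
        x = pper c u v} ∧
    sInf {x : ℝ | ∃ (c : Plane → Fin k) (u v : Plane), Measurable c ∧
        LinearIndependent ℝ ![u, v] ∧
        (∀ y : Plane, c (y + u) = c y ∧ c (y + v) = c y) ∧
        x = pper c u v} ≤ 1 / k := by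
  classical
  have hT0 : ∀ x ∈ {x : ℝ | ∃ (c : Plane → Fin k) (u v : Plane), Measurable c ∧
      LinearIndependent ℝ ![u, v] ∧
      (∀ y : Plane, c (y + u) = c y ∧ c (y + v) = c y) ∧
      x = pper c u v}, 0 ≤ x := by
    rintro x ⟨c, u, v, hc, hli, hper, rfl⟩
    exact pper_nonneg hli
  obtain ⟨c₀, u₀, v₀, hc₀, hli₀, hper₀, hle₀⟩ := part2 hk
  have hTne : {x : ℝ | ∃ (c : Plane → Fin k) (u v : Plane), Measurable c ∧
      LinearIndependent ℝ ![u, v] ∧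
      (∀ y : Plane, c (y + u) = c y ∧ c (y + v) = c y) ∧
      x = pper c u v}.Nonempty :=
    ⟨pper c₀ u₀ v₀, c₀, u₀, v₀, hc₀, hli₀, hper₀, rfl⟩
  have hbdd : BddBelow {x : ℝ | ∃ (c : Plane → Fin k) (u v : Plane), Measurable c ∧
      LinearIndependent ℝ ![u, v] ∧
      (∀ y : Plane, c (y + u) = c y ∧ c (y + v) = c y) ∧
      x = pper c u v} := ⟨0, fun x hx => hT0 x hx⟩
  constructor
  · apply Real.sSup_le
    · rintro x ⟨n, G, hne, ⟨f, hf⟩, rfl⟩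
      apply le_csInf hTne
      rintro y ⟨c, u, v, hc, hli, hper, rfl⟩
      exact part1 hk G hne hf hc hli hper
    · exact le_csInf hTne (fun y hy => hT0 y hy)
  · exact le_trans
      (csInf_le hbdd ⟨c₀, u₀, v₀, hc₀, hli₀, hper₀, rfl⟩) hle₀

end
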